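/- arXiv:1807.04747 — 4 statements merged into one kernel-verified Lean document; each statement's English description precedes it below -/
import Mathlib

section
/- For any words $u, v$ in the free noncommutative algebra $\mathbb{Q}\langle e_0, e_1\rangle$ and any $a \in \{0,1\}$, the element $(u \shuffle v)e_a - u e_a \epsilon(v)$ lies in the subspace $\mathfrak{h} \shuffle \mathfrak{h}$ spanned by all shuffle products $w_1 \shuffle w_2$ with $w_1, w_2 \in \mathfrak{h}$, where $\mathfrak{h} = e_0\mathbb{Q}\langle e_0,e_1\rangle \oplus e_1\mathbb{Q}\langle e_0,e_1\rangle$ and $\epsilon$ is the anti-automorphism sending $e_a \mapsto -e_a$. -/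
open Finsupp

/-- Words in the letters `e₀, e₁`. -/
abbrev Word := List (Fin 2)

/-- The free noncommutative algebra `ℚ⟨e₀,e₁⟩`, as finitely supported functions on words. -/
abbrev QA := Word →₀ ℚ

/-- Concatenation product on `ℚ⟨e₀,e₁⟩`. -/
noncomputable def conc (x y : QA) : QA :=
  x.sum fun u a => y.sum fun v b => Finsupp.single (u ++ v) (a * b)

/-- Shuffle product of two words. -/
noncomputable def sw : Word → Word → QA
  | [], v => Finsupp.single v 1
  | u :: us, [] => Finsupp.single (u :: us) 1
  | a :: u, b :: v =>
      Finsupp.mapDomain (a :: ·) (sw u (b :: v)) +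
      Finsupp.mapDomain (b :: ·) (sw (a :: u) v)
termination_by u v => u.length + v.length

/-- Shuffle product on `ℚ⟨e₀,e₁⟩`, extended bilinearly. -/
noncomputable def shuffle (x y : QA) : QA :=
  x.sum fun u a => y.sum fun v b => (a * b) • sw u v

/-- The anti-automorphism `ε` with `ε(e_a) = -e_a`. -/
noncomputable def eps (x : QA) : QA :=
  x.sum fun u a => Finsupp.single u.reverse ((-1 : ℚ) ^ u.length * a)

/-- `𝔥 = e₀ℚ⟨e₀,e₁⟩ ⊕ e₁ℚ⟨e₀,e₁⟩`: elements with vanishing constant term. -/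
noncomputable def hh : Submodule ℚ QA where
  carrier := {x | x [] = 0}
  add_mem' := by intro a b ha hb; simp_all [Finsupp.add_apply]
  zero_mem' := by simp
  smul_mem' := by intro c x hx; simp_all [Finsupp.smul_apply]

/-! ### Auxiliary lemmas -/

/-- `QA` viewed as the monoid algebra of the free monoid, whose multiplication is `conc`. -/
abbrev M := MonoidAlgebra ℚ (FreeMonoid (Fin 2))

noncomputable def m (x : QA) : M := MonoidAlgebra.ofCoeff x

lemma conc_eq (x y : QA) : conc x y = (m x * m y : M).coeff := by
  rw [MonoidAlgebra.mul_def]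
  simp only [MonoidAlgebra.coeff_finsuppSum, MonoidAlgebra.coeff_single]; rfl

lemma conc_single_single (u v : Word) (c d : ℚ) :
    conc (single u c) (single v d) = single (u ++ v) (c * d) := by
  rw [conc_eq]
  exact congrArg MonoidAlgebra.coeff (MonoidAlgebra.single_mul_single (R := ℚ) (M := FreeMonoid (Fin 2))
    (m₁ := u) (m₂ := v) (r₁ := c) (r₂ := d))

lemma conc_add_left (x y z : QA) : conc (x + y) z = conc x z + conc y z := by
  simp only [conc_eq]; exact congrArg MonoidAlgebra.coeff (add_mul (m x) (m y) (m z))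

lemma conc_add_right (x y z : QA) : conc x (y + z) = conc x y + conc x z := by
  simp only [conc_eq]; exact congrArg MonoidAlgebra.coeff (mul_add (m x) (m y) (m z))

lemma conc_assoc (x y z : QA) : conc (conc x y) z = conc x (conc y z) := by
  rw [conc_eq x y, conc_eq y z]
  exact (conc_eq _ _).trans ((congrArg MonoidAlgebra.coeff (mul_assoc (m x) (m y) (m z))).trans (conc_eq _ _).symm)

lemma conc_single_left (w : Word) (r : ℚ) (x : QA) :
    conc (single w r) x = x.sum fun v b => single (w ++ v) (r * b) := by
  unfold conc; rw [Finsupp.sum_single_index]; simp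

lemma mapDomain_cons (c : Fin 2) (x : QA) :
    Finsupp.mapDomain (c :: ·) x = conc (single [c] 1) x := by
  rw [conc_single_left]; simp [Finsupp.mapDomain]

lemma sw_nil (v : Word) : sw [] v = single v 1 := by simp [sw]

lemma sw_nil' (u : Word) : sw u [] = single u 1 := by cases u <;> simp [sw]

lemma sw_cons (a b : Fin 2) (u v : Word) :
    sw (a :: u) (b :: v) =
      conc (single [a] 1) (sw u (b :: v)) + conc (single [b] 1) (sw (a :: u) v) := by
  rw [sw]; rw [mapDomain_cons, mapDomain_cons]

/-- Right-hand recursion for the shuffle product. -/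
theorem swR (u v : Word) (a b : Fin 2) :
    sw (u ++ [a]) (v ++ [b]) =
      conc (sw u (v ++ [b])) (single [a] 1) + conc (sw (u ++ [a]) v) (single [b] 1) := by
  match u, v with
  | [], [] =>
      simp [sw_nil, sw_nil', sw_cons, conc_single_single, add_comm]
  | [], d :: v' =>
      have IH := swR [] v' a b
      simp only [List.cons_append, List.nil_append] at IH ⊢
      simp only [sw_cons, sw_nil, IH, conc_add_right, conc_add_left, conc_assoc,
        conc_single_single, one_mul, List.append_assoc, List.cons_append,
        List.singleton_append, List.nil_append]
      abel
  | c :: u', [] =>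
      have IH := swR u' [] a b
      simp only [List.cons_append, List.nil_append, List.append_nil] at IH ⊢
      simp only [sw_cons, sw_nil', IH, conc_add_right, conc_add_left, conc_assoc,
        conc_single_single, one_mul, List.append_assoc, List.cons_append,
        List.singleton_append, List.nil_append]
      abel
  | c :: u', d :: v' =>
      have IH1 := swR u' (d :: v') a b
      have IH2 := swR (c :: u') v' a b
      simp only [List.cons_append, List.nil_append] at IH1 IH2 ⊢
      simp only [sw_cons, IH1, IH2, conc_add_right, conc_add_left, conc_assoc,
        conc_single_single, one_mul, List.append_assoc, List.cons_append,
        List.singleton_append, List.nil_append]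
      try abel
termination_by u.length + v.length
decreasing_by all_goals (simp only [List.length_append, List.length_cons, List.length_nil]; omega)

lemma mem_hh {x : QA} : x ∈ hh ↔ x [] = 0 := Iff.rfl

lemma single_mem_hh {w : Word} (h : w ≠ []) (c : ℚ) : Finsupp.single w c ∈ hh := by
  rw [mem_hh, Finsupp.single_apply, if_neg h]

lemma shuffle_single_single (u v : Word) :
    shuffle (single u 1) (single v 1) = sw u v := by
  unfold shuffle
  rw [Finsupp.sum_single_index, Finsupp.sum_single_index] <;> simp

lemma eps_single (v : Word) :
    eps (single v 1) = single v.reverse ((-1 : ℚ) ^ v.length) := by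
  unfold eps
  rw [Finsupp.sum_single_index] <;> simp

abbrev SS : Set QA := {z : QA | ∃ x y : QA, x ∈ hh ∧ y ∈ hh ∧ z = shuffle x y}

lemma sw_mem_span {u v : Word} (hu : u ≠ []) (hv : v ≠ []) :
    sw u v ∈ Submodule.span ℚ SS := by
  apply Submodule.subset_span
  exact ⟨single u 1, single v 1, single_mem_hh hu 1, single_mem_hh hv 1,
    (shuffle_single_single u v).symm⟩

lemma key (v : Word) : ∀ (u : Word) (a : Fin 2),
    conc (sw u v) (single [a] 1) - single (u ++ [a] ++ v.reverse) ((-1 : ℚ) ^ v.length)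
      ∈ Submodule.span ℚ SS := by
  induction v using List.reverseRecOn with
  | nil =>
      intro u a
      simp only [sw_nil', conc_single_single, List.reverse_nil, List.append_nil,
        List.length_nil, pow_zero, one_mul, sub_self]
      exact zero_mem _
  | append_singleton v' b IH =>
      intro u a
      have h1 : sw (u ++ [a]) (v' ++ [b]) ∈ Submodule.span ℚ SS :=
        sw_mem_span (by simp) (by simp)
      have h2 := IH (u ++ [a]) b
      have e : conc (sw u (v' ++ [b])) (single [a] 1)
            - single (u ++ [a] ++ (v' ++ [b]).reverse) ((-1 : ℚ) ^ (v' ++ [b]).length)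
          = sw (u ++ [a]) (v' ++ [b])
            - (conc (sw (u ++ [a]) v') (single [b] 1)
              - single ((u ++ [a]) ++ [b] ++ v'.reverse) ((-1 : ℚ) ^ v'.length)) := by
        rw [swR u v' a b]
        simp only [List.reverse_append, List.reverse_singleton, List.length_append,
          List.length_singleton, pow_succ, pow_one, List.append_assoc, List.singleton_append,
          List.cons_append, List.nil_append, mul_neg_one, Finsupp.single_neg]
        abel
      rw [e]
      exact sub_mem h1 h2

/-- `(u ⧢ v)e_a - u e_a ε(v)` lies in the span of shuffle products of elements of `𝔥`. -/
theorem stmt0 (u v : Word) (a : Fin 2) :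
    conc (sw u v) (Finsupp.single [a] 1)
      - conc (conc (Finsupp.single u 1) (Finsupp.single [a] 1)) (eps (Finsupp.single v 1))
    ∈ Submodule.span ℚ {z : QA | ∃ x y : QA, x ∈ hh ∧ y ∈ hh ∧ z = shuffle x y} := by
  have := key v u a
  rw [eps_single, conc_single_single, conc_single_single]
  simpa only [List.append_assoc, List.singleton_append, List.cons_append, one_mul,
    mul_one] using this
end

section
/- The deconcatenation coproduct $\Delta(k_1,\dots,k_d) = \sum_{i=0}^{d} (k_1,\dots,k_i) \otimes (k_{i+1},\dots,k_d)$ is a ring homomorphism with respect to the harmonic product, i.e., $\Delta(\Bbbk * \Bbbk') = \Delta(\Bbbk) * \Delta(\Bbbk')$ where the product on $\mathbb{I} \otimes \mathbb{I}$ is componentwise harmonic product. Consequently $(\mathbb{I}, *, \Delta)$ is a commutative bialgebra. -/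
open Finsupp

/-- The ℚ-vector space `𝕀` with basis all finite tuples of positive integers. -/
abbrev II := List ℕ+ →₀ ℚ

/-- The harmonic (stuffle) product of two indices. -/
noncomputable def harW : List ℕ+ → List ℕ+ → II
  | [], v => Finsupp.single v 1
  | u :: us, [] => Finsupp.single (u :: us) 1
  | k :: ks, l :: ls =>
      Finsupp.mapDomain (k :: ·) (harW ks (l :: ls)) +
      Finsupp.mapDomain (l :: ·) (harW (k :: ks) ls) +
      Finsupp.mapDomain ((k + l) :: ·) (harW ks ls)
termination_by u v => u.length + v.length

/-- The harmonic product on `𝕀`, extended bilinearly. -/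
noncomputable def har (x y : II) : II :=
  x.sum fun u a => y.sum fun v b => (a * b) • harW u v

/-- The harmonic product as a bilinear map. -/
noncomputable def harL : II →ₗ[ℚ] II →ₗ[ℚ] II :=
  Finsupp.lsum ℚ fun u => LinearMap.toSpanSingleton ℚ (II →ₗ[ℚ] II)
    (Finsupp.lsum ℚ fun v => LinearMap.toSpanSingleton ℚ II (harW u v))

open TensorProduct in
/-- The deconcatenation coproduct `Δ` on `𝕀`. -/
noncomputable def delta : II →ₗ[ℚ] II ⊗[ℚ] II :=
  Finsupp.lsum ℚ fun k => LinearMap.toSpanSingleton ℚ (II ⊗[ℚ] II)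
    (∑ i ∈ Finset.range (k.length + 1),
      Finsupp.single (k.take i) (1 : ℚ) ⊗ₜ[ℚ] Finsupp.single (k.drop i) (1 : ℚ))

open TensorProduct in
/-- The componentwise harmonic product on `𝕀 ⊗ 𝕀`. -/
noncomputable def harT : (II ⊗[ℚ] II) →ₗ[ℚ] (II ⊗[ℚ] II) →ₗ[ℚ] (II ⊗[ℚ] II) :=
  TensorProduct.map₂ harL harL

open TensorProduct

lemma harW_nil_left (v : List ℕ+) : harW [] v = Finsupp.single v 1 := by
  cases v <;> simp [harW]

lemma harW_nil_right (u : List ℕ+) : harW u [] = Finsupp.single u 1 := by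
  cases u <;> simp [harW]

lemma harW_cons_cons (k l : ℕ+) (ks ls : List ℕ+) :
    harW (k :: ks) (l :: ls) =
      Finsupp.mapDomain (k :: ·) (harW ks (l :: ls)) +
      Finsupp.mapDomain (l :: ·) (harW (k :: ks) ls) +
      Finsupp.mapDomain ((k + l) :: ·) (harW ks ls) := by
  rw [harW]

lemma delta_single (w : List ℕ+) (c : ℚ) :
    delta (Finsupp.single w c) =
      c • ∑ i ∈ Finset.range (w.length + 1),
        Finsupp.single (w.take i) (1:ℚ) ⊗ₜ[ℚ] Finsupp.single (w.drop i) (1:ℚ) := by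
  simp [delta]

lemma harL_single (u v : List ℕ+) (a b : ℚ) :
    harL (Finsupp.single u a) (Finsupp.single v b) = (a * b) • harW u v := by
  simp [harL, mul_smul]

lemma delta_cons (k : ℕ+) (x : II) :
    delta (Finsupp.mapDomain (k :: ·) x) =
      Finsupp.single ([] : List ℕ+) (1:ℚ) ⊗ₜ[ℚ] Finsupp.mapDomain (k :: ·) x +
      (TensorProduct.map (Finsupp.lmapDomain ℚ ℚ (k :: ·)) LinearMap.id) (delta x) := by
  induction x using Finsupp.induction_linear with
  | zero => simp
  | add f g hf hg =>
      simp only [Finsupp.mapDomain_add, map_add, hf, hg, TensorProduct.tmul_add]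
      rw [add_add_add_comm]
  | single w c =>
      rw [Finsupp.mapDomain_single, delta_single, delta_single, map_smul,
        map_sum]
      simp only [TensorProduct.map_tmul, Finsupp.lmapDomain_apply,
        Finsupp.mapDomain_single, LinearMap.id_coe, id_eq]
      rw [List.length_cons, Finset.sum_range_succ']
      simp only [List.take_succ_cons, List.drop_succ_cons, List.take_zero, List.drop_zero]
      rw [smul_add, add_comm]
      congr 1
      rw [← TensorProduct.tmul_smul, Finsupp.smul_single, smul_eq_mul, mul_one]

lemma harW_comm : ∀ u v : List ℕ+, harW u v = harW v u
  | [], v => by rw [harW_nil_left, harW_nil_right]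
  | u :: us, [] => by rw [harW_nil_left, harW_nil_right]
  | k :: ks, l :: ls => by
      rw [harW_cons_cons, harW_cons_cons l k]
      rw [harW_comm ks (l :: ls), harW_comm (k :: ks) ls, harW_comm ks ls, add_comm k l]
      abel
termination_by u v => u.length + v.length
decreasing_by all_goals simp +arith +decide

lemma split_sum {M : Type*} [AddCommMonoid M] (n m : ℕ) (f : ℕ → ℕ → M) :
    ∑ i ∈ Finset.range (n + 1), ∑ j ∈ Finset.range (m + 1), f i j =
      f 0 0 + (∑ i ∈ Finset.range n, f (i + 1) 0) + (∑ j ∈ Finset.range m, f 0 (j + 1)) +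
        ∑ i ∈ Finset.range n, ∑ j ∈ Finset.range m, f (i + 1) (j + 1) := by
  rw [Finset.sum_range_succ']
  rw [Finset.sum_range_succ' (fun j => f 0 j) m]
  rw [Finset.sum_congr rfl (fun i _ => Finset.sum_range_succ' (fun j => f (i + 1) j) m)]
  rw [Finset.sum_add_distrib]
  abel

lemma split_sum_right {M : Type*} [AddCommMonoid M] (n m : ℕ) (f : ℕ → ℕ → M) :
    ∑ i ∈ Finset.range n, ∑ j ∈ Finset.range (m + 1), f i j =
      (∑ i ∈ Finset.range n, f i 0) +
        ∑ i ∈ Finset.range n, ∑ j ∈ Finset.range m, f i (j + 1) := by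
  rw [Finset.sum_congr rfl (fun i _ => Finset.sum_range_succ' (fun j => f i j) m)]
  rw [Finset.sum_add_distrib]
  abel

lemma split_sum_left {M : Type*} [AddCommMonoid M] (n m : ℕ) (f : ℕ → ℕ → M) :
    ∑ i ∈ Finset.range (n + 1), ∑ j ∈ Finset.range m, f i j =
      (∑ j ∈ Finset.range m, f 0 j) +
        ∑ i ∈ Finset.range n, ∑ j ∈ Finset.range m, f (i + 1) j := by
  rw [Finset.sum_range_succ']
  abel

set_option maxHeartbeats 1000000 in
open TensorProduct in
lemma delta_harW : ∀ u v : List ℕ+,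
    delta (harW u v) =
      ∑ i ∈ Finset.range (u.length + 1), ∑ j ∈ Finset.range (v.length + 1),
        harW (u.take i) (v.take j) ⊗ₜ[ℚ] harW (u.drop i) (v.drop j)
  | [], v => by
      simp [harW_nil_left, delta_single, Finset.sum_range_one]
  | u :: us, [] => by
      simp [harW_nil_right, delta_single, Finset.sum_range_one]
  | k :: ks, l :: ls => by
      have ha := delta_harW ks (l :: ls)
      have hb := delta_harW (k :: ks) ls
      have hc := delta_harW ks ls
      rw [harW_cons_cons, map_add, map_add, delta_cons, delta_cons, delta_cons, ha, hb, hc]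
      simp only [map_sum, TensorProduct.map_tmul, Finsupp.lmapDomain_apply,
        LinearMap.id_coe, id_eq, List.length_cons]
      rw [split_sum (ks.length + 1) (ls.length + 1)]
      rw [split_sum_right (ks.length + 1) (ls.length + 1)]
      rw [split_sum_left (ks.length + 1) (ls.length + 1)]
      simp only [List.take_succ_cons, List.drop_succ_cons, List.take_zero, List.drop_zero,
        harW_nil_left, harW_nil_right, Finsupp.mapDomain_single, harW_cons_cons,
        TensorProduct.add_tmul, TensorProduct.tmul_add, Finset.sum_add_distrib]
      ac_rfl
termination_by u v => u.length + v.length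
decreasing_by all_goals simp +arith +decide


/-- The deconcatenation coproduct is a homomorphism for the harmonic product,
so `(𝕀, *, Δ)` is a commutative bialgebra. -/
theorem stmt4 :
    (∀ x y : II, delta (harL x y) = harT (delta x) (delta y)) ∧
    (∀ x y : II, harL x y = harL y x) := by
  have hcomm : harL = harL.flip := by
    apply Finsupp.lhom_ext; intro u a
    apply Finsupp.lhom_ext; intro v b
    simp only [LinearMap.flip_apply, harL_single]
    rw [harW_comm, mul_comm]
  have h2 : harL.compr₂ delta = (harT ∘ₗ delta).compl₂ delta := by
    apply Finsupp.lhom_ext; intro u a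
    apply Finsupp.lhom_ext; intro v b
    simp only [LinearMap.compr₂_apply, LinearMap.compl₂_apply, LinearMap.comp_apply,
      harL_single, map_smul, delta_harW, delta_single, LinearMap.smul_apply,
      harT, TensorProduct.map₂_apply_tmul, map_sum, LinearMap.sum_apply,
      TensorProduct.map_tmul, smul_smul]
    rw [Finset.sum_comm]
    simp only [one_mul, one_smul, Finset.smul_sum, smul_smul, mul_comm]
  constructor
  · intro x y
    have := LinearMap.congr_fun (LinearMap.congr_fun h2 x) y
    simpa using this
  · intro x y
    have := LinearMap.congr_fun (LinearMap.congr_fun hcomm x) y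
    simpa using this
end

section
/- Let $\mathcal{Z}$ be the $\mathbb{Q}$-subalgebra of $\mathbb{R}$ generated by all multiple zeta values, and suppose $x \in \mathcal{Z}[2\pi i] = \mathcal{Z} \oplus 2\pi i \mathcal{Z}$ (assuming this sum is direct since $\mathcal{Z} \subset \mathbb{R}$). Then the refined symmetric multiple zeta value $\zeta^{RS}(k_1,\dots,k_d)$, defined by the formula $\zeta^{RS}(k_1,\dots,k_d) = \sum_{\substack{0 \le a \le b \le d \\ k_j = 1 \text{ for all } a < j \le b}} \frac{(-2\pi i)^{b-a}}{(b-a+1)!}(-1)^{k_{b+1}+\cdots+k_d}\, \zeta_\shuffle(k_1,\dots,k_a)\, \zeta_\shuffle(k_d,\dots,k_{b+1})$, satisfies $\mathrm{Re}\,\zeta^{RS}(k_1,\dots,k_d) \equiv \sum_{i=0}^{d} (-1)^{k_{i+1}+\cdots+k_d}\zeta_\shuffle(k_1,\dots,k_i)\zeta_\shuffle(k_d,\dots,k_{i+1}) \pmod{\pi^2 \mathcal{Z}}$; that is, $\zeta^{RS}$ is a lift of the symmetric multiple zeta value $\zeta^S$. -/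
open Complex

/-- The refined symmetric multiple zeta value `ζ^{RS}(k₁,…,k_d)`, defined by the explicit
formula from the paper in terms of the shuffle-regularized values `zsh`:
`ζ^{RS}(𝕜) = ∑_{0≤a≤b≤d, k_j=1 for a<j≤b} ((-2πi)^{b-a}/(b-a+1)!) (-1)^{k_{b+1}+⋯+k_d}
ζ_⧢(k₁,…,k_a) ζ_⧢(k_d,…,k_{b+1})`. -/
noncomputable def zrs (zsh : List ℕ+ → ℝ) (k : List ℕ+) : ℂ :=
  ∑ a ∈ Finset.range (k.length + 1), ∑ b ∈ Finset.range (k.length + 1),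
    if a ≤ b ∧ (k.drop a).take (b - a) = List.replicate (b - a) 1 then
      (-(2 * (Real.pi : ℂ) * I)) ^ (b - a) / ((b - a + 1).factorial : ℂ) *
        (-1 : ℂ) ^ (((k.drop b).map fun x => (x : ℕ)).sum) *
        ((zsh (k.take a) : ℝ) : ℂ) * ((zsh ((k.drop b).reverse) : ℝ) : ℂ)
    else 0

/-- `ζ^{RS}` is a lift of the symmetric multiple zeta value `ζ^S`: the real part of
`ζ^{RS}(𝕜)` is congruent to `∑_{i=0}^d (-1)^{k_{i+1}+⋯+k_d} ζ_⧢(k₁,…,k_i)ζ_⧢(k_d,…,k_{i+1})`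
modulo `π²𝒵`.  Here `𝒵` is the `ℚ`-algebra of multiple zeta values, abstracted as a
`ℚ`-subalgebra of `ℝ` containing `π²` and all the regularized values `zsh`. -/
theorem stmt11 (Z : Subalgebra ℚ ℝ) (hpi : Real.pi ^ 2 ∈ Z)
    (zsh : List ℕ+ → ℝ) (hone : zsh [] = 1) (hz : ∀ k, zsh k ∈ Z) (k : List ℕ+) :
    ∃ c ∈ Z, (zrs zsh k).re
      - ∑ i ∈ Finset.range (k.length + 1),
          (-1 : ℝ) ^ (((k.drop i).map fun x => (x : ℕ)).sum) *
            zsh (k.take i) * zsh ((k.drop i).reverse)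
      = Real.pi ^ 2 * c := by
  classical
  have hQ : ∀ q : ℚ, (q : ℝ) ∈ Z := fun q => by
    simpa using Z.algebraMap_mem q
  set F : ℕ → ℕ → ℂ := fun a b =>
    if a ≤ b ∧ (k.drop a).take (b - a) = List.replicate (b - a) 1 then
      (-(2 * (Real.pi : ℂ) * I)) ^ (b - a) / ((b - a + 1).factorial : ℂ) *
        (-1 : ℂ) ^ (((k.drop b).map fun x => (x : ℕ)).sum) *
        ((zsh (k.take a) : ℝ) : ℂ) * ((zsh ((k.drop b).reverse) : ℝ) : ℂ)
    else 0 with hF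
  -- sum-closure of the predicate
  have Psum : ∀ (s : Finset ℕ) (f : ℕ → ℝ), (∀ i ∈ s, ∃ c ∈ Z, f i = Real.pi ^ 2 * c) →
      ∃ c ∈ Z, (∑ i ∈ s, f i) = Real.pi ^ 2 * c := by
    intro s f h
    induction s using Finset.induction with
    | empty => exact ⟨0, zero_mem _, by simp⟩
    | @insert a s ha ih =>
        obtain ⟨c, hc, hc2⟩ := h a (Finset.mem_insert_self _ _)
        obtain ⟨c', hc', hc2'⟩ := ih fun i hi => h i (Finset.mem_insert_of_mem hi)
        exact ⟨c + c', add_mem hc hc', by rw [Finset.sum_insert ha, hc2, hc2']; ring⟩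
  -- off-diagonal terms
  have key : ∀ a b : ℕ, a ≠ b → ∃ c ∈ Z, (F a b).re = Real.pi ^ 2 * c := by
    intro a b hab
    by_cases hcond : a ≤ b ∧ (k.drop a).take (b - a) = List.replicate (b - a) 1
    · have hlt : a < b := lt_of_le_of_ne hcond.1 hab
      have hn : 1 ≤ b - a := Nat.sub_pos_of_lt hlt
      set n := b - a with hnn
      set s := ((k.drop b).map fun x => (x : ℕ)).sum with hs
      set x := zsh (k.take a) with hx
      set y := zsh ((k.drop b).reverse) with hy
      rcases Nat.even_or_odd n with ⟨m, hm⟩ | ⟨m, hm⟩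
      · -- even case: n = m + m, m ≥ 1
        have hm1 : 1 ≤ m := by omega
        obtain ⟨m', rfl⟩ : ∃ m', m = m' + 1 := ⟨m - 1, by omega⟩
        have hn2 : n = 2 * (m' + 1) := by omega
        have h1 : (-(2 * (Real.pi : ℂ) * I)) ^ n
            = ((((-2 * Real.pi) ^ n * (-1) ^ (m' + 1) : ℝ)) : ℂ) := by
          have e1 : -(2 * (Real.pi : ℂ) * I) = ((-2 * Real.pi : ℝ) : ℂ) * I := by
            push_cast; ring
          have hI : (I : ℂ) ^ (2 * (m' + 1)) = (((-1 : ℝ) ^ (m' + 1) : ℝ) : ℂ) := by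
            rw [pow_mul, I_sq]; push_cast; ring
          rw [e1, mul_pow, hn2, hI]
          push_cast; ring
        have hval : (F a b).re
            = (-2 * Real.pi) ^ n / ((n + 1).factorial : ℝ) * (-1) ^ (m' + 1)
              * (-1) ^ s * x * y := by
          have : F a b = ((((-2 * Real.pi) ^ n / ((n + 1).factorial : ℝ) * (-1) ^ (m' + 1)
              * (-1) ^ s * x * y : ℝ)) : ℂ) := by
            simp only [hF]
            rw [if_pos hcond]
            rw [show b - a = n from rfl, h1]
            push_cast
            ring
          rw [this, Complex.ofReal_re]
        refine ⟨(4 * Real.pi ^ 2) ^ m' *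
          ((4 * (-1) ^ (m' + 1) / ((n + 1).factorial : ℚ) : ℚ) : ℝ) * ((-1) ^ s * x * y),
          ?_, ?_⟩
        · refine mul_mem (mul_mem (pow_mem ?_ _) (hQ _)) (mul_mem (mul_mem ?_ (hz _)) (hz _))
          · exact mul_mem (by simpa using hQ 4) hpi
          · rcases Nat.even_or_odd s with he | ho
            · rw [he.neg_one_pow]; simpa using hQ 1
            · rw [ho.neg_one_pow]; simpa using hQ (-1)
        · rw [hval]
          have hpow : (-2 * Real.pi) ^ n = (4 * Real.pi ^ 2) ^ (m' + 1) := by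
            rw [hn2, pow_mul]
            congr 1
            ring
          rw [hpow, pow_succ]
          have hfac : ((n + 1).factorial : ℝ) ≠ 0 := by positivity
          push_cast
          field_simp
      · -- odd case: purely imaginary
        have h1 : (-(2 * (Real.pi : ℂ) * I)) ^ n
            = ((((-2 * Real.pi) ^ n * (-1) ^ m : ℝ)) : ℂ) * I := by
          have e1 : -(2 * (Real.pi : ℂ) * I) = ((-2 * Real.pi : ℝ) : ℂ) * I := by
            push_cast; ring
          have hI : (I : ℂ) ^ (2 * m + 1) = (((-1 : ℝ) ^ m : ℝ) : ℂ) * I := by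
            rw [pow_succ, pow_mul, I_sq]; push_cast; ring
          rw [e1, mul_pow, hm, hI]
          push_cast; ring
        have : F a b = ((((-2 * Real.pi) ^ n * (-1) ^ m / ((n + 1).factorial : ℝ)
            * (-1) ^ s * x * y : ℝ)) : ℂ) * I := by
          simp only [hF]
          rw [if_pos hcond]
          rw [show b - a = n from rfl, h1]
          push_cast
          ring
        refine ⟨0, zero_mem _, ?_⟩
        rw [this, Complex.mul_I_re, Complex.ofReal_im, neg_zero, mul_zero]
    · refine ⟨0, zero_mem _, ?_⟩
      simp only [hF]
      rw [if_neg hcond]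
      simp
  -- diagonal terms
  have hdiag : ∀ a : ℕ, (F a a).re
      = (-1 : ℝ) ^ (((k.drop a).map fun x => (x : ℕ)).sum) *
          zsh (k.take a) * zsh ((k.drop a).reverse) := by
    intro a
    have hc : a ≤ a ∧ (k.drop a).take (a - a) = List.replicate (a - a) 1 := by
      simp
    have : F a a = ((((-1 : ℝ) ^ (((k.drop a).map fun x => (x : ℕ)).sum) *
        zsh (k.take a) * zsh ((k.drop a).reverse) : ℝ)) : ℂ) := by
      simp only [hF]
      rw [if_pos hc]
      simp [Nat.sub_self, Nat.factorial]
    rw [this, Complex.ofReal_re]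
  -- put it together
  have hre : (zrs zsh k).re = ∑ a ∈ Finset.range (k.length + 1),
      ∑ b ∈ Finset.range (k.length + 1), (F a b).re := by
    rw [zrs, Complex.re_sum]
    exact Finset.sum_congr rfl fun a _ => Complex.re_sum _ _
  have hsplit : ∀ a ∈ Finset.range (k.length + 1),
      ∑ b ∈ Finset.range (k.length + 1), (F a b).re
        = (F a a).re + ∑ b ∈ (Finset.range (k.length + 1)).erase a, (F a b).re := by
    intro a ha
    exact (Finset.add_sum_erase _ _ ha).symm
  rw [hre, Finset.sum_congr rfl hsplit, Finset.sum_add_distrib]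
  have : ∑ a ∈ Finset.range (k.length + 1), (F a a).re
      = ∑ i ∈ Finset.range (k.length + 1),
          (-1 : ℝ) ^ (((k.drop i).map fun x => (x : ℕ)).sum) *
            zsh (k.take i) * zsh ((k.drop i).reverse) :=
    Finset.sum_congr rfl fun a _ => hdiag a
  rw [this, add_sub_cancel_left]
  refine Psum _ _ fun a _ => Psum _ _ fun b hb => key a b ?_
  exact fun h => (Finset.mem_erase.mp hb).1 h.symm
end

section
/- Let $R = \mathbb{C}\langle\langle X_0,X_1\rangle\rangle$ with anti-automorphism $\epsilon(X_a) = -X_a$, let $\Phi_0 \in R$ have constant term $1$, and let $G(X_1) \in \mathbb{C}[[X_1]]$ be an even power series with constant term $1$ (so $\epsilon(G(X_1)) = G(X_1)$ since $G$ is even). Define $\Phi_*(T) = \Phi_0 G(X_1)^{-1}\exp(-TX_1)$ and $\Phi^L(T) = \Phi_0\exp(TX_1)\epsilon(\Phi_0)$. If $G(t)^2 = \frac{\pi t}{\sin(\pi t)}$ as formal power series, then $\Phi_*(T_1) X_1 \epsilon(\Phi_*(T_2)) = \frac{\Phi^L(\pi i - T_1 + T_2) - \Phi^L(-\pi i - T_1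 + T_2)}{2\pi i}$, where both sides are formal power series whose coefficients are polynomials in $T_1, T_2$. -/
open Complex

/-- Noncommutative formal power series `ℂ⟨⟨X₀,X₁⟩⟩`, encoded by their word coefficients. -/
def R := List (Fin 2) → ℂ

/-- The product of noncommutative power series (convolution over splittings of a word). -/
noncomputable def mulR (f g : R) : R :=
  fun w => ∑ i ∈ Finset.range (w.length + 1), f (w.take i) * g (w.drop i)

/-- The continuous anti-automorphism `ε` with `ε(X_a) = -X_a`. -/
def epsR (f : R) : R := fun w => (-1 : ℂ) ^ w.length * f w.reverse

/-- The series `X₁`. -/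
def X1el : R := fun w => if w = [1] then 1 else 0

/-- The series `exp(T X₁) = ∑ Tⁿ X₁ⁿ/n!`. -/
noncomputable def expX1 (T : ℂ) : R :=
  fun w => if w = List.replicate w.length 1 then T ^ w.length / w.length.factorial else 0

/-- `Φ^L(T) = Φ₀ exp(T X₁) ε(Φ₀)`. -/
noncomputable def PhiL (Phi0 : R) (T : ℂ) : R := mulR (mulR Phi0 (expX1 T)) (epsR Phi0)

/-- `Φ_⧢(T) = Φ₀ exp(-T X₁)`. -/
noncomputable def PhiSh (Phi0 : R) (T : ℂ) : R := mulR Phi0 (expX1 (-T))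

/-- Embedding of the commutative power series ring `ℂ[[X₁]]` into `R`. -/
noncomputable def emb (f : PowerSeries ℂ) : R :=
  fun w => if w = List.replicate w.length 1 then PowerSeries.coeff w.length f else 0

lemma repl_iff (w : List (Fin 2)) : w = List.replicate w.length 1 ↔ ∀ x ∈ w, x = 1 := by
  rw [List.eq_replicate_iff]; simp

lemma mulR_assoc (f g h : R) : mulR (mulR f g) h = mulR f (mulR g h) := by
  funext w
  simp only [mulR]
  have L : ∀ i ∈ Finset.range (w.length + 1),
      (∑ j ∈ Finset.range ((w.take i).length + 1), f ((w.take i).take j) * g ((w.take i).drop j)) * h (w.drop i)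
      = ∑ j ∈ Finset.range (i+1), f (w.take j) * g ((w.drop j).take (i-j)) * h (w.drop i) := by
    intro i hi
    rw [Finset.mem_range] at hi
    have hlen : (w.take i).length = i := by rw [List.length_take]; omega
    rw [hlen, Finset.sum_mul]
    refine Finset.sum_congr rfl ?_
    intro j hj
    rw [Finset.mem_range] at hj
    rw [List.take_take, List.drop_take, min_eq_left (by omega)]
  rw [Finset.sum_congr rfl L]
  have Rr : ∀ j ∈ Finset.range (w.length + 1),
      f (w.take j) * (∑ k ∈ Finset.range ((w.drop j).length + 1), g ((w.drop j).take k) * h ((w.drop j).drop k))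
      = ∑ i ∈ Finset.Ico j (w.length+1), f (w.take j) * g ((w.drop j).take (i-j)) * h (w.drop i) := by
    intro j hj
    rw [Finset.mem_range] at hj
    have hlen : (w.drop j).length = w.length - j := by rw [List.length_drop]
    rw [hlen, Finset.mul_sum, Finset.sum_Ico_eq_sum_range]
    have h1 : w.length + 1 - j = w.length - j + 1 := by omega
    rw [h1]
    refine Finset.sum_congr rfl ?_
    intro k hk
    rw [List.drop_drop]
    have h2 : j + k - j = k := by omega
    rw [h2, mul_assoc]
  rw [Finset.sum_congr rfl Rr]
  exact Finset.sum_comm' (by intro i j; simp only [Finset.mem_range, Finset.mem_Ico]; omega) 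

lemma epsR_mulR (f g : R) : epsR (mulR f g) = mulR (epsR g) (epsR f) := by
  funext w
  simp only [epsR, mulR, Finset.mul_sum, List.length_reverse, List.length_take, List.length_drop]
  rw [← Finset.sum_range_reflect]
  refine Finset.sum_congr rfl ?_
  intro i hi
  rw [Finset.mem_range] at hi
  have h1 : w.length + 1 - 1 - i = w.length - i := by omega
  rw [h1, List.reverse_take, List.reverse_drop, min_eq_left (by omega)]
  have h3 : ((-1:ℂ)^i) * (-1:ℂ)^(w.length - i) = (-1:ℂ)^w.length := by
    rw [← pow_add]; congr 1; omega
  rw [← h3]; ring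


lemma emb_mul (f g : PowerSeries ℂ) : emb (f * g) = mulR (emb f) (emb g) := by
  funext w
  simp only [emb, mulR]
  by_cases hw : w = List.replicate w.length 1
  · rw [if_pos hw, PowerSeries.coeff_mul, Finset.Nat.sum_antidiagonal_eq_sum_range_succ_mk]
    refine Finset.sum_congr rfl ?_
    intro i hi
    rw [Finset.mem_range] at hi
    have ht : w.take i = List.replicate i 1 := by
      conv_lhs => rw [hw]
      rw [List.take_replicate]
      congr 1
      omega
    have hd : w.drop i = List.replicate (w.length - i) 1 := by
      conv_lhs => rw [hw]
      rw [List.drop_replicate]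
    have hlt : (w.take i).length = i := by rw [List.length_take]; omega
    have hld : (w.drop i).length = w.length - i := by rw [List.length_drop]
    rw [if_pos (by rw [hlt]; exact ht), if_pos (by rw [hld]; exact hd), hlt, hld]
  · rw [if_neg hw]
    symm
    apply Finset.sum_eq_zero
    intro i _
    by_cases h1 : w.take i = List.replicate (w.take i).length 1
    · by_cases h2 : w.drop i = List.replicate (w.drop i).length 1
      · exfalso
        apply hw
        rw [repl_iff]
        intro x hx
        rw [← List.take_append_drop i w, List.mem_append] at hx
        rcases hx with hx | hx
        · exact (repl_iff _).1 h1 x hx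
        · exact (repl_iff _).1 h2 x hx
      · rw [if_neg h2, mul_zero]
    · rw [if_neg h1, zero_mul]

lemma X1el_emb : X1el = emb PowerSeries.X := by
  funext w
  simp only [X1el, emb, PowerSeries.coeff_X]
  by_cases h : w = [1]
  · subst h
    norm_num
  · rw [if_neg h]
    by_cases h2 : w = List.replicate w.length 1
    · rw [if_pos h2, if_neg]
      intro hl
      apply h
      rw [h2, hl]
      rfl
    · rw [if_neg h2]

lemma expX1_emb (T : ℂ) : expX1 T = emb (PowerSeries.rescale T (PowerSeries.exp ℂ)) := by
  funext w
  simp only [expX1, emb, PowerSeries.coeff_rescale, PowerSeries.coeff_exp]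
  by_cases h : w = List.replicate w.length 1
  · rw [if_pos h, if_pos h]
    rw [show (algebraMap ℚ ℂ) (1 / (w.length.factorial : ℚ)) = ((1 / (w.length.factorial : ℚ) : ℚ) : ℂ) from rfl]
    push_cast
    ring
  · rw [if_neg h, if_neg h]

lemma epsR_emb (f : PowerSeries ℂ) : epsR (emb f) = emb (PowerSeries.rescale (-1) f) := by
  funext w
  simp only [epsR, emb, PowerSeries.coeff_rescale, List.length_reverse]
  by_cases h : w = List.replicate w.length 1
  · have hr : w.reverse = List.replicate w.reverse.length 1 := by
      rw [repl_iff]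
      intro x hx
      rw [List.mem_reverse] at hx
      exact (repl_iff _).1 h x hx
    simp only [List.length_reverse] at hr
    rw [if_pos h, if_pos hr]
  · have hr : ¬ w.reverse = List.replicate w.reverse.length 1 := by
      intro hc
      apply h
      rw [repl_iff]
      intro x hx
      exact (repl_iff _).1 hc x (by rwa [List.mem_reverse])
    simp only [List.length_reverse] at hr
    rw [if_neg h, if_neg hr, mul_zero]

lemma emb_emb (a b : PowerSeries ℂ) (c : R) :
    mulR (emb a) (mulR (emb b) c) = mulR (emb (a * b)) c := by
  rw [emb_mul, mulR_assoc]

lemma mulR_lin_right (f p q : R) (c : ℂ) :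
    mulR f (fun y => c * (p y - q y)) = fun y => c * (mulR f p y - mulR f q y) := by
  funext w
  simp only [mulR, Finset.mul_sum, ← Finset.sum_sub_distrib]
  refine Finset.sum_congr rfl fun i _ => ?_
  ring

lemma mulR_lin_left (p q g : R) (c : ℂ) :
    mulR (fun y => c * (p y - q y)) g = fun y => c * (mulR p g y - mulR q g y) := by
  funext w
  simp only [mulR, Finset.mul_sum, ← Finset.sum_sub_distrib]
  refine Finset.sum_congr rfl fun i _ => ?_
  ring


lemma emb_C_mul_sub (c : ℂ) (u v : PowerSeries ℂ) :
    emb (PowerSeries.C c * (u - v)) = fun y => c * (emb u y - emb v y) := by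
  funext w
  simp only [emb, PowerSeries.coeff_C_mul, map_sub]
  by_cases h : w = List.replicate w.length 1
  · rw [if_pos h, if_pos h, if_pos h]
  · rw [if_neg h, if_neg h, if_neg h]
    ring

lemma keySX :
    (PowerSeries.mk (fun n =>
      if Even n then (-1 : ℂ) ^ (n / 2) * (Real.pi : ℂ) ^ n / (n + 1).factorial else 0)) * PowerSeries.X
    = PowerSeries.C (2*(Real.pi:ℂ)*I)⁻¹ *
        (PowerSeries.rescale ((Real.pi:ℂ)*I) (PowerSeries.exp ℂ) - PowerSeries.rescale (-((Real.pi:ℂ)*I)) (PowerSeries.exp ℂ)) := by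
  have hpi : ((Real.pi : ℂ)) ≠ 0 := Complex.ofReal_ne_zero.2 Real.pi_ne_zero
  have h2 : (2*(Real.pi:ℂ)*I) ≠ 0 := by simp [hpi, I_ne_zero]
  ext n
  cases n with
  | zero =>
    rw [PowerSeries.coeff_zero_mul_X, PowerSeries.coeff_C_mul, map_sub,
      PowerSeries.coeff_rescale, PowerSeries.coeff_rescale]
    simp [PowerSeries.coeff_exp]
  | succ n =>
    rw [PowerSeries.coeff_succ_mul_X, PowerSeries.coeff_mk, PowerSeries.coeff_C_mul, map_sub,
      PowerSeries.coeff_rescale, PowerSeries.coeff_rescale, PowerSeries.coeff_exp]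
    have hA : (algebraMap ℚ ℂ) (1 / ((n+1).factorial : ℚ)) = (((n+1).factorial : ℂ))⁻¹ := by
      rw [eq_ratCast]
      push_cast
      rw [one_div]
    rw [hA]
    have hfact : (((n+1).factorial : ℂ)) ≠ 0 := by
      exact_mod_cast Nat.cast_ne_zero.2 (Nat.factorial_ne_zero (n+1))
    rcases Nat.even_or_odd n with he | ho
    · rw [if_pos he]
      have hodd : Odd (n+1) := he.add_one
      rw [Odd.neg_pow hodd]
      have hI : ((Real.pi:ℂ)*I)^n = (-1:ℂ)^(n/2) * (Real.pi:ℂ)^n := by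
        obtain ⟨k, hk⟩ := he
        subst hk
        have hdiv : (k+k)/2 = k := by omega
        have hI2 : I ^ (k+k) = (-1:ℂ)^k := by
          rw [show k+k = 2*k by ring, pow_mul, I_sq]
        rw [mul_pow, hdiv, hI2]
        ring
      rw [pow_succ, hI]
      field_simp
      ring
    · rw [if_neg (by simpa [Nat.even_iff, Nat.odd_iff] using ho)]
      have heven : Even (n+1) := ho.add_one
      rw [Even.neg_pow heven]
      simp

/-- If `G(t)² = πt/sin(πt)`, with `G` even with constant term 1, and
`Φ_*(T) = Φ₀ G(X₁)⁻¹ exp(-T X₁)`, then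
`Φ_*(T₁) X₁ ε(Φ_*(T₂)) = (Φ^L(πi - T₁ + T₂) - Φ^L(-πi - T₁ + T₂))/(2πi)`. -/
theorem stmt14 (Phi0 : R) (h0 : Phi0 [] = 1) (G : PowerSeries ℂ)
    (hconst : PowerSeries.constantCoeff G = 1)
    (heven : ∀ n : ℕ, Odd n → PowerSeries.coeff n G = 0)
    (hG2 : G ^ 2 * PowerSeries.mk (fun n =>
      if Even n then (-1 : ℂ) ^ (n / 2) * (Real.pi : ℂ) ^ n / (n + 1).factorial else 0) = 1)
    (T1 T2 : ℂ) (w : List (Fin 2)) :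
    mulR (mulR (mulR (mulR Phi0 (emb G⁻¹)) (expX1 (-T1))) X1el)
        (epsR (mulR (mulR Phi0 (emb G⁻¹)) (expX1 (-T2)))) w
      = (PhiL Phi0 ((Real.pi : ℂ) * I - T1 + T2) w
          - PhiL Phi0 (-(Real.pi : ℂ) * I - T1 + T2) w) / (2 * (Real.pi : ℂ) * I) := by
  have hpi : ((Real.pi : ℂ)) ≠ 0 := Complex.ofReal_ne_zero.2 Real.pi_ne_zero
  have h2 : (2*(Real.pi:ℂ)*I) ≠ 0 := by simp [hpi, I_ne_zero]
  have hC : PowerSeries.constantCoeff G ≠ 0 := by rw [hconst]; exact one_ne_zero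
  have hG : PowerSeries.rescale (-1) G = G := by
    ext n
    rw [PowerSeries.coeff_rescale]
    rcases Nat.even_or_odd n with he | ho
    · rw [he.neg_one_pow, one_mul]
    · rw [heven n ho, mul_zero]
  have hGinv : PowerSeries.rescale (-1) G⁻¹ = G⁻¹ := by
    rw [PowerSeries.eq_inv_iff_mul_eq_one hC]
    calc PowerSeries.rescale (-1) G⁻¹ * G
        = PowerSeries.rescale (-1) G⁻¹ * PowerSeries.rescale (-1) G := by rw [hG]
      _ = PowerSeries.rescale (-1) (G⁻¹ * G) := (map_mul _ _ _).symm
      _ = 1 := by rw [PowerSeries.inv_mul_cancel G hC, map_one]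
  set S : PowerSeries ℂ := PowerSeries.mk (fun n =>
      if Even n then (-1 : ℂ) ^ (n / 2) * (Real.pi : ℂ) ^ n / (n + 1).factorial else 0) with hSdef
  have hS : G⁻¹ * G⁻¹ = S := by
    have h1 : G⁻¹ * G = 1 := PowerSeries.inv_mul_cancel G hC
    calc G⁻¹ * G⁻¹ = G⁻¹ * G⁻¹ * (G^2 * S) := by rw [hG2, mul_one]
      _ = (G⁻¹*G) * ((G⁻¹*G) * S) := by rw [pow_two]; ring
      _ = S := by rw [h1, one_mul, one_mul]
  have hres2 : PowerSeries.rescale (-1) (PowerSeries.rescale (-T2) (PowerSeries.exp ℂ))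
      = PowerSeries.rescale T2 (PowerSeries.exp ℂ) := by
    rw [PowerSeries.rescale_rescale]
    norm_num
  have hmid : G⁻¹ * PowerSeries.rescale (-T1) (PowerSeries.exp ℂ)
        * (PowerSeries.X * (PowerSeries.rescale T2 (PowerSeries.exp ℂ) * G⁻¹))
      = PowerSeries.C (2*(Real.pi:ℂ)*I)⁻¹ *
        (PowerSeries.rescale ((Real.pi:ℂ)*I - T1 + T2) (PowerSeries.exp ℂ)
          - PowerSeries.rescale (-(Real.pi:ℂ)*I - T1 + T2) (PowerSeries.exp ℂ)) := by
    have hexp : PowerSeries.rescale (-T1) (PowerSeries.exp ℂ) * PowerSeries.rescale T2 (PowerSeries.exp ℂ)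
        = PowerSeries.rescale (-T1 + T2) (PowerSeries.exp ℂ) :=
      PowerSeries.exp_mul_exp_eq_exp_add _ _
    calc G⁻¹ * PowerSeries.rescale (-T1) (PowerSeries.exp ℂ)
          * (PowerSeries.X * (PowerSeries.rescale T2 (PowerSeries.exp ℂ) * G⁻¹))
        = (G⁻¹ * G⁻¹) * PowerSeries.X
            * (PowerSeries.rescale (-T1) (PowerSeries.exp ℂ) * PowerSeries.rescale T2 (PowerSeries.exp ℂ)) := by
          ring
      _ = (S * PowerSeries.X) * PowerSeries.rescale (-T1 + T2) (PowerSeries.exp ℂ) := by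
          rw [hS, hexp]
      _ = PowerSeries.C (2*(Real.pi:ℂ)*I)⁻¹ *
          (PowerSeries.rescale ((Real.pi:ℂ)*I) (PowerSeries.exp ℂ) * PowerSeries.rescale (-T1+T2) (PowerSeries.exp ℂ)
            - PowerSeries.rescale (-((Real.pi:ℂ)*I)) (PowerSeries.exp ℂ) * PowerSeries.rescale (-T1+T2) (PowerSeries.exp ℂ)) := by
          rw [hSdef, keySX]; ring
      _ = _ := by
          rw [PowerSeries.exp_mul_exp_eq_exp_add, PowerSeries.exp_mul_exp_eq_exp_add]
          have e1 : (Real.pi:ℂ)*I + (-T1+T2) = (Real.pi:ℂ)*I - T1 + T2 := by ring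
          have e2 : -((Real.pi:ℂ)*I) + (-T1+T2) = -(Real.pi:ℂ)*I - T1 + T2 := by ring
          rw [e1, e2]
  rw [epsR_mulR, epsR_mulR, expX1_emb (-T2), expX1_emb (-T1), epsR_emb, epsR_emb, X1el_emb,
    hres2, hGinv]
  simp only [PhiL, expX1_emb, mulR_assoc, emb_emb]
  rw [hmid, emb_C_mul_sub, mulR_lin_left, mulR_lin_right]
  beta_reduce
  rw [inv_mul_eq_div]
end
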